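/- Let G = (V, E) be an undirected graph. Starting from the identity parent function P₀(v) = v, apply any finite sequence of operations each of which either (a) merges two trees by linking the root of the tree containing u to a vertex in the tree containing v for some edge (u,v) ∈ E, or (b) performs path compression, i.e., changes P(w) from its current value to any vertex on the path from w to its root (strictly preserving roots of all trees and the partition into trees). If at the end, for every edge (u,v) ∈ E the roots of u and v coincide, then the final root function is a correct connectivity labeling of G: root(u) = root(v) iff u and v are in the same connected component. -/
import Mathlib


/-- Starting from the identity labeling, apply a finite sequence of operations,
each of which either (a) merges the trees of the two endpoints of some edge of
`G` (leaving all other trees unchanged), or (b) performs path compression,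
which preserves the partition into trees. Here `R t` denotes the root function
after `t` operations. If at the end every edge of `G` has both endpoints with
the same root, then the final root function is a correct connectivity labeling
of `G`. -/
theorem union_find_final_labeling_correct {V : Type*} (G : SimpleGraph V)
    (T : ℕ) (R : ℕ → V → V)
    (h0 : R 0 = id)
    (hstep : ∀ t < T,
      (∃ u v, G.Adj u v ∧ ∀ a b, R (t+1) a = R (t+1) b ↔
        (R t a = R t b ∨ (R t a = R t u ∧ R t b = R t v) ∨
          (R t a = R t v ∧ R t b = R t u))) ∨
      (∀ a b, R (t+1) a = R (t+1) b ↔ R t a = R t b))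
    (hfin : ∀ u v, G.Adj u v → R T u = R T v) :
    ∀ u v, R T u = R T v ↔ G.Reachable u v := by
  have sound : ∀ t, t ≤ T → ∀ a b, R t a = R t b → G.Reachable a b := by
    intro t
    induction t with
    | zero =>
      intro _ a b hab
      simp [h0] at hab
      exact hab ▸ SimpleGraph.Reachable.refl _
    | succ t ih =>
      intro ht a b hab
      have ht' : t < T := ht
      rcases hstep t ht' with ⟨u, v, huv, hiff⟩ | hiff
      · rcases (hiff a b).mp hab with h | ⟨h1, h2⟩ | ⟨h1, h2⟩
        · exact ih ht'.le a b h
        · exact ((ih ht'.le a u h1).trans huv.reachable).trans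
            (ih ht'.le b v h2).symm
        · exact ((ih ht'.le a v h1).trans huv.symm.reachable).trans
            (ih ht'.le b u h2).symm
      · exact ih ht'.le a b ((hiff a b).mp hab)
  have step : ∀ t < T, ∀ a b, R t a = R t b → R (t+1) a = R (t+1) b := by
    intro t ht a b hab
    rcases hstep t ht with ⟨u, v, _, hiff⟩ | hiff
    · exact (hiff a b).mpr (Or.inl hab)
    · exact (hiff a b).mpr hab
  have mono : ∀ t, t ≤ T → ∀ a b, R t a = R t b → R T a = R T b := by
    intro t ht a b hab
    have key : ∀ s, t ≤ s → s ≤ T → R s a = R s b := by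
      intro s hts
      induction s, hts using Nat.le_induction with
      | base => intro _; exact hab
      | succ n hn ih => intro hsT; exact step n (by omega) a b (ih (by omega))
    exact key T ht le_rfl
  intro u v
  constructor
  · exact sound T le_rfl u v
  · intro hr
    rcases hr with ⟨w⟩
    induction w with
    | nil => rfl
    | cons h _ ih => exact (hfin _ _ h).trans ih
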